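/- Let n ≥ 1, let P be an n × n matrix over 𝔽₂ with P Pᵀ = I, let G be the associated bipartite graph on V = L ⊔ R, and fix a vertex i ∈ L. Then for every subset A ⊆ V \ {i}, with complement B = (V \ {i}) \ A, at least one of A and B contains a set of the form D ∪ (Odd(D) \ {i}) with D ⊆ R and |D ∩ N_i| odd. (That is, for every bipartition of the players into A and B, at least one side contains a generating authorized set of Γ_{i,gen}; this is the completeness and perfectness of the access structure.) -/

import Mathlib

open Matrix

/-- The bipartite graph on `Fin n ⊕ Fin n` (left copy `L = Sum.inl`, right copy
`R = Sum.inr`) in which `Sum.inl a` is adjacent to `Sum.inr b` iff `P a b = 1`,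
and there are no other edges. -/
def bipGraph (n : ℕ) (P : Matrix (Fin n) (Fin n) (ZMod 2)) :
    SimpleGraph (Fin n ⊕ Fin n) where
  Adj u v := (∃ a b, P a b = 1 ∧ u = Sum.inl a ∧ v = Sum.inr b) ∨
             (∃ a b, P a b = 1 ∧ u = Sum.inr b ∧ v = Sum.inl a)
  symm := by
    constructor
    rintro u v (⟨a, b, h, rfl, rfl⟩ | ⟨a, b, h, rfl, rfl⟩)
    · exact Or.inr ⟨a, b, h, rfl, rfl⟩
    · exact Or.inl ⟨a, b, h, rfl, rfl⟩
  loopless := by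
    constructor
    rintro u (⟨a, b, h, rfl, h2⟩ | ⟨a, b, h, rfl, h2⟩) <;> simp at h2

/-- The odd neighbourhood of a set `S`: the set of vertices `v` such that the number
of neighbours of `v` lying in `S` is odd. -/
def oddNbhd {V : Type*} (G : SimpleGraph V) (S : Set V) : Set V :=
  {v | Odd (G.neighborSet v ∩ S).ncard}

lemma zmod2_ne_zero {x : ZMod 2} (h : x ≠ 0) : x = 1 := by revert h; revert x; decide

lemma zmod2_ne_one {x : ZMod 2} (h : x ≠ 1) : x = 0 := by revert h; revert x; decide

lemma odd_ncard_iff {n : ℕ} (f d : Fin n → ZMod 2) :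
    Odd {b | f b = 1 ∧ d b = 1}.ncard ↔ ∑ b, f b * d b = 1 := by
  classical
  have h1 : ∑ b, f b * d b =
      ((Finset.univ.filter (fun b => f b = 1 ∧ d b = 1)).card : ZMod 2) := by
    rw [← Finset.sum_boole]
    refine Finset.sum_congr rfl fun b _ => ?_
    by_cases hf : f b = 1
    · by_cases hd : d b = 1
      · simp [hf, hd]
      · simp [hf, hd, zmod2_ne_one hd]
    · simp [hf, zmod2_ne_one hf]
  have h2 : {b | f b = 1 ∧ d b = 1}.ncard =
      (Finset.univ.filter (fun b => f b = 1 ∧ d b = 1)).card := by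
    rw [Set.ncard_eq_toFinset_card']
    congr 1
    ext b; simp
  rw [h1, h2]
  set c := (Finset.univ.filter (fun b => f b = 1 ∧ d b = 1)).card
  rw [← ZMod.natCast_mod c 2, Nat.odd_iff]
  rcases Nat.mod_two_eq_zero_or_one c with h | h <;> simp [h] <;> decide

lemma mem_nbhd_inl {n : ℕ} (P : Matrix (Fin n) (Fin n) (ZMod 2)) (a : Fin n)
    (v : Fin n ⊕ Fin n) :
    v ∈ (bipGraph n P).neighborSet (Sum.inl a) ↔ ∃ b, P a b = 1 ∧ v = Sum.inr b := by
  simp only [SimpleGraph.mem_neighborSet, bipGraph]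
  constructor
  · rintro (⟨a', b, h, ha, rfl⟩ | ⟨a', b, h, ha, hv⟩)
    · exact ⟨b, by cases ha; exact h, rfl⟩
    · simp at ha
  · rintro ⟨b, h, rfl⟩
    exact Or.inl ⟨a, b, h, rfl, rfl⟩

lemma mem_nbhd_inr {n : ℕ} (P : Matrix (Fin n) (Fin n) (ZMod 2)) (b : Fin n)
    (v : Fin n ⊕ Fin n) :
    v ∈ (bipGraph n P).neighborSet (Sum.inr b) ↔ ∃ a, P a b = 1 ∧ v = Sum.inl a := by
  simp only [SimpleGraph.mem_neighborSet, bipGraph]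
  constructor
  · rintro (⟨a, b', h, ha, hv⟩ | ⟨a, b', h, hb, rfl⟩)
    · simp at ha
    · exact ⟨a, by cases hb; exact h, rfl⟩
  · rintro ⟨a, h, rfl⟩
    exact Or.inr ⟨a, b, h, rfl, rfl⟩

/-- Given a vector `d` encoding a suitable set `D ⊆ R`, produce the authorized set. -/
lemma build {n : ℕ} (P : Matrix (Fin n) (Fin n) (ZMod 2)) (i : Fin n)
    (C : Set (Fin n ⊕ Fin n)) (d : Fin n → ZMod 2)
    (h1 : P.mulVec d i = 1)
    (h2 : ∀ b, d b = 1 → Sum.inr b ∈ C)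
    (h3 : ∀ a, a ≠ i → P.mulVec d a = 1 → Sum.inl a ∈ C) :
    ∃ D : Set (Fin n ⊕ Fin n), D ⊆ Set.range Sum.inr ∧
      Odd ((D ∩ (bipGraph n P).neighborSet (Sum.inl i)).ncard) ∧
      D ∪ (oddNbhd (bipGraph n P) D \ {Sum.inl i}) ⊆ C := by
  classical
  refine ⟨Sum.inr '' {b | d b = 1}, Set.image_subset_range _ _, ?_, ?_⟩
  · have hset : (Sum.inr '' {b | d b = 1}) ∩ (bipGraph n P).neighborSet (Sum.inl i)
        = Sum.inr '' {b | P i b = 1 ∧ d b = 1} := by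
      ext v
      simp only [Set.mem_inter_iff, Set.mem_image, Set.mem_setOf_eq, mem_nbhd_inl]
      constructor
      · rintro ⟨⟨b, hb, rfl⟩, ⟨b', hb', heq⟩⟩
        cases heq
        exact ⟨b, ⟨hb', hb⟩, rfl⟩
      · rintro ⟨b, ⟨hP, hd⟩, rfl⟩
        exact ⟨⟨b, hd, rfl⟩, ⟨b, hP, rfl⟩⟩
    rw [hset, Set.ncard_image_of_injective _ Sum.inr_injective, odd_ncard_iff]
    exact h1
  · have hodd_inl : ∀ a : Fin n, Sum.inl a ∈ oddNbhd (bipGraph n P) (Sum.inr '' {b | d b = 1})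
        ↔ P.mulVec d a = 1 := by
      intro a
      have hset : (bipGraph n P).neighborSet (Sum.inl a) ∩ (Sum.inr '' {b | d b = 1})
          = Sum.inr '' {b | P a b = 1 ∧ d b = 1} := by
        ext v
        simp only [Set.mem_inter_iff, Set.mem_image, Set.mem_setOf_eq, mem_nbhd_inl]
        constructor
        · rintro ⟨⟨b, hb, rfl⟩, ⟨b', hb', heq⟩⟩
          cases heq
          exact ⟨b, ⟨hb, hb'⟩, rfl⟩
        · rintro ⟨b, ⟨hP, hd⟩, rfl⟩
          exact ⟨⟨b, hP, rfl⟩, ⟨b, hd, rfl⟩⟩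
      simp only [oddNbhd, Set.mem_setOf_eq, hset,
        Set.ncard_image_of_injective _ Sum.inr_injective, odd_ncard_iff]
      rfl
    have hodd_inr : ∀ b : Fin n, Sum.inr b ∉ oddNbhd (bipGraph n P) (Sum.inr '' {c | d c = 1}) := by
      intro b hb
      have hset : (bipGraph n P).neighborSet (Sum.inr b) ∩ (Sum.inr '' {c | d c = 1}) = ∅ := by
        ext v
        simp only [Set.mem_inter_iff, Set.mem_image, Set.mem_setOf_eq, mem_nbhd_inr,
          Set.mem_empty_iff_false, iff_false, not_and]
        rintro ⟨a, _, rfl⟩ ⟨c, _, hc⟩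
        simp at hc
      simp only [oddNbhd, Set.mem_setOf_eq, hset, Set.ncard_empty] at hb
      exact (Nat.not_odd_iff_even.mpr Even.zero) hb
    rintro v (⟨b, hb, rfl⟩ | ⟨hv, hvi⟩)
    · exact h2 b hb
    · cases v with
      | inl a =>
        refine h3 a ?_ ((hodd_inl a).mp hv)
        intro h; exact hvi (by simp [h])
      | inr b => exact absurd hv (hodd_inr b)

/-- Vectors supported on a set `s`. -/
def suppSub {n : ℕ} (s : Set (Fin n)) : Submodule (ZMod 2) (Fin n → ZMod 2) where
  carrier := {x | ∀ a, a ∉ s → x a = 0}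
  add_mem' := fun hx hy a ha => by simp [hx a ha, hy a ha]
  zero_mem' := fun a _ => rfl
  smul_mem' := fun c x hx a ha => by simp [hx a ha]

/-- for the vertex `i ∈ L` and any subset `A ⊆ V \\ {i}` with complement
`B = (V \\ {i}) \\ A`, at least one of `A` and `B` contains a generating authorized set
`D ∪ (Odd(D) \\ {i})` with `D ⊆ R` and `|D ∩ N_i|` odd. -/
theorem stmt3 (n : ℕ) (hn : 1 ≤ n) (P : Matrix (Fin n) (Fin n) (ZMod 2))
    (hP : P * Pᵀ = 1) (i : Fin n) (A : Set (Fin n ⊕ Fin n))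
    (hA : A ⊆ ({Sum.inl i}ᶜ : Set (Fin n ⊕ Fin n))) :
    (∃ D : Set (Fin n ⊕ Fin n), D ⊆ Set.range Sum.inr ∧
      Odd ((D ∩ (bipGraph n P).neighborSet (Sum.inl i)).ncard) ∧
      D ∪ (oddNbhd (bipGraph n P) D \ {Sum.inl i}) ⊆ A) ∨
    (∃ D : Set (Fin n ⊕ Fin n), D ⊆ Set.range Sum.inr ∧
      Odd ((D ∩ (bipGraph n P).neighborSet (Sum.inl i)).ncard) ∧
      D ∪ (oddNbhd (bipGraph n P) D \ {Sum.inl i}) ⊆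
        (({Sum.inl i}ᶜ : Set (Fin n ⊕ Fin n)) \ A)) := by
  classical
  set S : Set (Fin n) := {a | Sum.inl a ∈ A} with hS
  set T : Set (Fin n) := {b | Sum.inr b ∈ A} with hT
  have hiS : i ∉ S := fun h => (hA h) rfl
  set X : Submodule (ZMod 2) (Fin n → ZMod 2) :=
    (suppSub T).map P.mulVecLin ⊔ suppSub S with hX
  by_cases hmem : Pi.single i 1 ∈ X
  · -- case A
    left
    rw [hX, Submodule.mem_sup] at hmem
    obtain ⟨y, hy, z, hz, hyz⟩ := hmem
    rw [Submodule.mem_map] at hy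
    obtain ⟨d, hd, rfl⟩ := hy
    refine build P i A d ?_ ?_ ?_
    · have := congrFun hyz i
      have hzi : z i = 0 := hz i hiS
      simpa [Matrix.mulVecLin_apply, hzi] using this
    · intro b hb
      by_contra hbA
      have : d b = 0 := hd b hbA
      rw [this] at hb; exact absurd hb (by decide)
    · intro a ha hPda
      by_contra haA
      have hza : z a = 0 := hz a haA
      have := congrFun hyz a
      rw [Matrix.mulVecLin_apply] at this
      simp only [Pi.add_apply, hza, add_zero, hPda] at this
      rw [Pi.single_apply] at this
      simp [ha] at this
  · -- case B
    right
    obtain ⟨f, hfx, hfX⟩ := Submodule.exists_dual_map_eq_bot_of_notMem hmem inferInstance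
    have hfz : ∀ z ∈ X, f z = 0 := by
      intro z hz
      have : f z ∈ X.map f := Submodule.mem_map_of_mem hz
      rwa [hfX, Submodule.mem_bot] at this
    set y : Fin n → ZMod 2 := fun a => f (Pi.single a 1) with hy
    have hyi : y i = 1 := zmod2_ne_zero hfx
    have hySy : ∀ a ∈ S, y a = 0 := by
      intro a ha
      refine hfz _ (Submodule.mem_sup_right ?_)
      intro c hc
      rw [Pi.single_apply, if_neg (fun h : c = a => hc (h ▸ ha))]
    have hfeval : ∀ z : Fin n → ZMod 2, f z = ∑ a, z a * y a := by
      intro z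
      have hrep : z = ∑ a, z a • Pi.single a (1 : ZMod 2) := by
        ext j
        simp [Pi.single_apply, Finset.sum_ite_eq', mul_comm]
      conv_lhs => rw [hrep]
      rw [map_sum]
      exact Finset.sum_congr rfl fun a _ => by rw [f.map_smul, smul_eq_mul]
    have hyT : ∀ b ∈ T, Pᵀ.mulVec y b = 0 := by
      intro b hb
      have hsingle : Pi.single b (1 : ZMod 2) ∈ suppSub T := by
        intro c hc
        rw [Pi.single_apply, if_neg (fun h : c = b => hc (h ▸ hb))]
      have hmem' : P.mulVecLin (Pi.single b 1) ∈ X :=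
        Submodule.mem_sup_left (Submodule.mem_map_of_mem hsingle)
      have := hfz _ hmem'
      rw [hfeval] at this
      rw [← this]
      simp [Matrix.mulVec, dotProduct, Matrix.mulVecLin_apply, Matrix.transpose_apply,
        Pi.single_apply, Finset.sum_ite_eq', mul_comm]
    set d : Fin n → ZMod 2 := Pᵀ.mulVec y with hd
    have hPdy : P.mulVec d = y := by
      rw [hd, Matrix.mulVec_mulVec, hP, Matrix.one_mulVec]
    refine build P i _ d ?_ ?_ ?_
    · rw [hPdy]; exact hyi
    · intro b hb
      refine ⟨by simp, ?_⟩
      intro hbA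
      have : d b = 0 := hyT b hbA
      rw [this] at hb; exact absurd hb (by decide)
    · intro a ha hPda
      rw [hPdy] at hPda
      refine ⟨by simp [ha], ?_⟩
      intro haA
      have := hySy a haA
      rw [hPda] at this; exact absurd this (by decide)
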